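/- Suppose u ≤ 0 satisfies ∫_Σ(2u + 2e^u(u² - u) - 16t²‖q‖²e^{-2u}(2u² + u)) ≥ 0 and ‖u‖_{L^p} ≤ C₃ for p = 1, 2. Then ∫_Σ 16t²‖q‖²e^{-2u}u² ≤ C₄ for a constant C₄ depending only on C₃ and the area of Σ. -/
import Mathlib


open MeasureTheory

/-- If `u ≤ 0` satisfies
`∫(2u + 2e^u(u² - u) - 16t²‖q‖²e^{-2u}(2u² + u)) ≥ 0` together with the `L^p`
bounds `‖u‖_{L¹} ≤ C₃`, `‖u‖_{L²} ≤ C₃` (and the a priori bound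
`∫16t²‖q‖²e^{-2u} ≤ 2A` coming from the integrated structure equation), then
`∫ 16t²‖q‖²e^{-2u}u² ≤ C₄` for a constant `C₄` depending only on `C₃` and the
area of `Σ`. -/
theorem stmt18
    (S : Type*) [MeasurableSpace S] (μ : Measure S) [IsFiniteMeasure μ]
    (C₃ : ℝ) :
    ∃ C₄ : ℝ, ∀ (u q2 : S → ℝ) (t : ℝ),
      (∀ x, 0 ≤ q2 x) →
      (∀ x, u x ≤ 0) →
      Integrable u μ →
      Integrable (fun x => (u x) ^ 2) μ →
      Integrable (fun x => (u x) ^ 2 * Real.exp (u x)) μ →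
      Integrable (fun x => u x * Real.exp (u x)) μ →
      Integrable (fun x => q2 x * Real.exp (-2 * u x)) μ →
      Integrable (fun x => q2 x * u x * Real.exp (-2 * u x)) μ →
      Integrable (fun x => q2 x * (u x) ^ 2 * Real.exp (-2 * u x)) μ →
      (∫ x, |u x| ∂μ ≤ C₃) →
      (∫ x, (u x) ^ 2 ∂μ ≤ C₃ ^ 2) →
      (∫ x, 16 * t ^ 2 * q2 x * Real.exp (-2 * u x) ∂μ
        ≤ 2 * (μ Set.univ).toReal) →
      (0 ≤ ∫ x, (2 * u x + 2 * Real.exp (u x) * ((u x) ^ 2 - u x)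
          - 16 * t ^ 2 * q2 x * Real.exp (-2 * u x) * (2 * (u x) ^ 2 + u x)) ∂μ) →
      ∫ x, 16 * t ^ 2 * q2 x * Real.exp (-2 * u x) * (u x) ^ 2 ∂μ ≤ C₄ := by
  refine ⟨2 * C₃ ^ 2 + 2 * C₃ + (μ Set.univ).toReal / 2, ?_⟩
  intro u q2 t hq hu hiu hiu2 hiu2e hiue hiq hiqu hiqu2 hL1 hL2 hI0 hpos
  set f : S → ℝ := fun x => 16 * t ^ 2 * q2 x * Real.exp (-2 * u x) with hf
  have hf0 : ∀ x, 0 ≤ f x := fun x => by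
    have h1 := (Real.exp_pos (-2 * u x)).le
    have h2 := hq x
    simp only [hf]
    positivity
  have hif : Integrable f μ := by
    have h := hiq.const_mul (16 * t ^ 2)
    refine h.congr (Filter.Eventually.of_forall fun x => ?_)
    simp [hf]; ring
  have hifu : Integrable (fun x => f x * u x) μ := by
    have h := hiqu.const_mul (16 * t ^ 2)
    refine h.congr (Filter.Eventually.of_forall fun x => ?_)
    simp [hf]; ring
  have hifu2 : Integrable (fun x => f x * u x ^ 2) μ := by
    have h := hiqu2.const_mul (16 * t ^ 2)
    refine h.congr (Filter.Eventually.of_forall fun x => ?_)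
    simp [hf]; ring
  set G : S → ℝ := fun x => 2 * u x + 2 * Real.exp (u x) * ((u x) ^ 2 - u x) with hG
  have hiG : Integrable G μ := by
    have h : Integrable (fun x => 2 * u x + 2 * ((u x)^2 * Real.exp (u x) - u x * Real.exp (u x))) μ :=
      (hiu.const_mul 2).add ((hiu2e.sub hiue).const_mul 2)
    refine h.congr (Filter.Eventually.of_forall fun x => ?_)
    simp [hG]; ring
  -- rewrite hpos
  have hpos' : 0 ≤ ∫ x, (G x - (2 * (f x * u x ^ 2) + f x * u x)) ∂μ := by
    refine le_of_le_of_eq hpos (integral_congr_ae (Filter.Eventually.of_forall fun x => ?_))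
    simp [hG, hf]; ring
  have hsplit : ∫ x, (G x - (2 * (f x * u x ^ 2) + f x * u x)) ∂μ
      = (∫ x, G x ∂μ) - (2 * ∫ x, f x * u x ^ 2 ∂μ + ∫ x, f x * u x ∂μ) := by
    have h2 : Integrable (fun x => 2 * (f x * u x ^ 2)) μ := hifu2.const_mul 2
    have hadd : Integrable (fun x => 2 * (f x * u x ^ 2) + f x * u x) μ := h2.add hifu
    rw [integral_sub hiG hadd, integral_add h2 hifu, integral_const_mul]
  -- bound ∫ G
  have hGle : ∫ x, G x ∂μ ≤ 2 * C₃ ^ 2 + 2 * C₃ := by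
    have hmono : ∫ x, G x ∂μ ≤ ∫ x, (2 * (u x) ^ 2 + 2 * |u x|) ∂μ := by
      refine integral_mono hiG ((hiu2.const_mul 2).add (hiu.abs.const_mul 2)) fun x => ?_
      have h1 : Real.exp (u x) ≤ 1 := Real.exp_le_one_iff.2 (hu x)
      have h2 : 0 ≤ Real.exp (u x) := (Real.exp_pos _).le
      have h3 : u x ≤ 0 := hu x
      have h4 : |u x| = -u x := abs_of_nonpos h3
      simp only [hG]
      rw [h4]
      nlinarith [sq_nonneg (u x)]
    have h5 : ∫ x, (2 * (u x) ^ 2 + 2 * |u x|) ∂μ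
        = 2 * (∫ x, (u x) ^ 2 ∂μ) + 2 * ∫ x, |u x| ∂μ := by
      have ha : Integrable (fun x => 2 * (u x) ^ 2) μ := hiu2.const_mul 2
      have hb : Integrable (fun x => 2 * |u x|) μ := hiu.abs.const_mul 2
      rw [integral_add ha hb, integral_const_mul, integral_const_mul]
    linarith [hmono, h5.le, hL1, hL2]
  -- -I1 ≤ I2 + I0/4
  have hI1 : -(∫ x, f x * u x ∂μ) ≤ (∫ x, f x * u x ^ 2 ∂μ) + (∫ x, f x ∂μ) / 4 := by
    have hmono : ∫ x, -(f x * u x) ∂μ ≤ ∫ x, (f x * u x ^ 2 + f x / 4) ∂μ := by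
      refine integral_mono hifu.neg (hifu2.add (hif.div_const 4)) fun x => ?_
      have := hf0 x
      nlinarith [sq_nonneg (u x + 1/2)]
    have hd : Integrable (fun x => f x / 4) μ := hif.div_const 4
    rw [integral_neg, integral_add hifu2 hd, integral_div] at hmono
    linarith
  have hI0' : ∫ x, f x ∂μ ≤ 2 * (μ Set.univ).toReal := hI0
  have hgoal : ∫ x, 16 * t ^ 2 * q2 x * Real.exp (-2 * u x) * (u x) ^ 2 ∂μ
      = ∫ x, f x * u x ^ 2 ∂μ := rfl
  rw [hgoal]
  rw [hsplit] at hpos'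
  linarith
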